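/- Let G be a (P6, banner)-free graph, H an induced 5-cycle with vertices v1,...,v5 (indices mod 5), and Q a connected vertex set disjoint from and anticomplete to H. Suppose x and y are vertices each having exactly three neighbors on H and each having a neighbor in Q, with N_H(x) = {v5, v1, v2} and N_H(y) = {v2, v3, v4}. Then x and y are adjacent. -/

import Mathlib

open SimpleGraph

/-- The banner: a 4-cycle 0-1-2-3-0 with a pendant vertex 4 adjacent to 0. -/
def banner : SimpleGraph (Fin 5) :=
  SimpleGraph.fromRel (fun i j => (i, j) ∈ [((0 : Fin 5), 1), (1, 2), (2, 3), (3, 0), (0, 4)])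

/-- The house: a 4-cycle 0-1-2-3-0 with a vertex 4 adjacent to 2 and 3. -/
def house : SimpleGraph (Fin 5) :=
  SimpleGraph.fromRel (fun i j => (i, j) ∈ [((0 : Fin 5), 1), (1, 2), (2, 3), (3, 0), (2, 4), (3, 4)])

/-- The chordless 4-cycle. -/
def cycle4 : SimpleGraph (Fin 4) :=
  SimpleGraph.fromRel (fun i j => j = i + 1)

/-- The chordless 5-cycle. -/
def cycle5 : SimpleGraph (Fin 5) :=
  SimpleGraph.fromRel (fun i j => j = i + 1)

/-- The complete bipartite graph K_{2,3}. -/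
def k23 : SimpleGraph (Fin 2 ⊕ Fin 3) := completeBipartiteGraph (Fin 2) (Fin 3)

/-- `G` contains no induced copy of `F` (an embedding preserves both adjacency
and non-adjacency). -/
def Free {W : Type*} {V : Type*} (F : SimpleGraph W) (G : SimpleGraph V) : Prop :=
  IsEmpty (F ↪g G)

/-- `v 0, ..., v 4` form an induced (chordless) 5-cycle of `G`, edges `v i - v (i+1)`. -/
def IsInducedC5 {V : Type*} (G : SimpleGraph V) (v : Fin 5 → V) : Prop :=
  Function.Injective v ∧ ∀ i j, G.Adj (v i) (v j) ↔ (j = i + 1 ∨ i = j + 1)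

/-- `v 0, ..., v 4` form an induced house in `G`: 4-cycle `v 0, v 1, v 2, v 3`
(standing for v1,v2,v3,v4) plus `v 4` (standing for v5) adjacent to `v 1` and `v 2`. -/
def IsInducedHouse {V : Type*} (G : SimpleGraph V) (v : Fin 5 → V) : Prop :=
  Function.Injective v ∧ ∀ i j, G.Adj (v i) (v j) ↔
    ((i, j) ∈ [((0 : Fin 5), 1), (1, 2), (2, 3), (3, 0), (1, 4), (2, 4)] ∨
     (j, i) ∈ [((0 : Fin 5), 1), (1, 2), (2, 3), (3, 0), (1, 4), (2, 4)])

/-- `Q` is disjoint from and anticomplete to the five vertices `v 0, ..., v 4`. -/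
def Anticomplete5 {V : Type*} (G : SimpleGraph V) (Q : Set V) (v : Fin 5 → V) : Prop :=
  (∀ i, v i ∉ Q) ∧ ∀ q ∈ Q, ∀ i, ¬ G.Adj q (v i)
set_option maxHeartbeats 2000000 in
theorem stmt_17 {V : Type*} (G : SimpleGraph V)
    (hp6 : _root_.Free (SimpleGraph.pathGraph 6) G) (hban : _root_.Free banner G)
    (v : Fin 5 → V) (hC5 : IsInducedC5 G v)
    (Q : Set V) (hQconn : (G.induce Q).Connected) (hQ : Anticomplete5 G Q v)
    (x y : V)
    (hxQ : ∃ q ∈ Q, G.Adj x q) (hyQ : ∃ q ∈ Q, G.Adj y q)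
    (hxN : {j | G.Adj x (v j)} = ({4, 0, 1} : Set (Fin 5)))
    (hyN : {j | G.Adj y (v j)} = ({1, 2, 3} : Set (Fin 5))) :
    G.Adj x y := by
  obtain ⟨hvinj, hvadj⟩ := hC5
  obtain ⟨hQv, hQanti⟩ := hQ
  have hx : ∀ j, G.Adj x (v j) ↔ (j = 4 ∨ j = 0 ∨ j = 1) := by
    intro j; simpa using Set.ext_iff.mp hxN j
  have hy : ∀ j, G.Adj y (v j) ↔ (j = 1 ∨ j = 2 ∨ j = 3) := by
    intro j; simpa using Set.ext_iff.mp hyN j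
  have hxQ' : x ∉ Q := fun h => hQanti x h 0 ((hx 0).mpr (by decide))
  have hyQ' : y ∉ Q := fun h => hQanti y h 1 ((hy 1).mpr (by decide))
  -- Lemma A : x is adjacent to neighbors (in Q) of its neighbors in Q
  have lemA : ∀ q q2, q ∈ Q → q2 ∈ Q → G.Adj x q → G.Adj q q2 → G.Adj x q2 := by
    intro q q2 hqQ hq2Q hxq hqq2
    by_contra hxq2
    have e23 : G.Adj (v 2) (v 3) := (hvadj 2 3).mpr (by decide)
    have e34 : G.Adj (v 3) (v 4) := (hvadj 3 4).mpr (by decide)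
    have e24 : ¬ G.Adj (v 2) (v 4) := fun h => by simpa using (hvadj 2 4).mp h
    have ex4 : G.Adj x (v 4) := (hx 4).mpr (by decide)
    have ex2 : ¬ G.Adj x (v 2) := fun h => by simpa using (hx 2).mp h
    have ex3 : ¬ G.Adj x (v 3) := fun h => by simpa using (hx 3).mp h
    have nq : ∀ i, ¬ G.Adj q (v i) := hQanti q hqQ
    have nq2 : ∀ i, ¬ G.Adj q2 (v i) := hQanti q2 hq2Q
    have ex0 : G.Adj x (v 0) := (hx 0).mpr (by decide)
    have ex1 : G.Adj x (v 1) := (hx 1).mpr (by decide)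
    have ne_xv : ∀ i : Fin 5, x ≠ v i := by
      intro i h
      have h4 := (hvadj i 4).mp (h ▸ ex4)
      have h1 := (hvadj i 1).mp (h ▸ ex1)
      have h0 := (hvadj i 0).mp (h ▸ ex0)
      fin_cases i <;>
        first
          | exact absurd h4 (by decide)
          | exact absurd h1 (by decide)
          | exact absurd h0 (by decide)
    have vne : ∀ i j : Fin 5, i ≠ j → v i ≠ v j := fun i j hij h => hij (hvinj h)
    refine hp6.false ⟨⟨![v 2, v 3, v 4, x, q, q2], ?_⟩, ?_⟩
    · have hxqne : x ≠ q := fun h => hxQ' (h ▸ hqQ)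
      have hxq2ne : x ≠ q2 := fun h => hxQ' (h ▸ hq2Q)
      have hqvne : ∀ i : Fin 5, q ≠ v i := fun i h => hQv i (h ▸ hqQ)
      have hq2vne : ∀ i : Fin 5, q2 ≠ v i := fun i h => hQv i (h ▸ hq2Q)
      have hqq2ne : q ≠ q2 := hqq2.ne
      intro a b
      fin_cases a <;> fin_cases b <;> intro h <;>
        first
          | rfl
          | exact absurd h (vne 2 3 (by decide)) | exact absurd h.symm (vne 2 3 (by decide))
          | exact absurd h (vne 2 4 (by decide)) | exact absurd h.symm (vne 2 4 (by decide))
          | exact absurd h (vne 3 4 (by decide)) | exact absurd h.symm (vne 3 4 (by decide))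
          | exact absurd h (ne_xv 2) | exact absurd h.symm (ne_xv 2)
          | exact absurd h (ne_xv 3) | exact absurd h.symm (ne_xv 3)
          | exact absurd h (ne_xv 4) | exact absurd h.symm (ne_xv 4)
          | exact absurd h (hqvne 2) | exact absurd h.symm (hqvne 2)
          | exact absurd h (hqvne 3) | exact absurd h.symm (hqvne 3)
          | exact absurd h (hqvne 4) | exact absurd h.symm (hqvne 4)
          | exact absurd h (hq2vne 2) | exact absurd h.symm (hq2vne 2)
          | exact absurd h (hq2vne 3) | exact absurd h.symm (hq2vne 3)
          | exact absurd h (hq2vne 4) | exact absurd h.symm (hq2vne 4)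
          | exact absurd h hxqne | exact absurd h.symm hxqne
          | exact absurd h hxq2ne | exact absurd h.symm hxq2ne
          | exact absurd h hqq2ne | exact absurd h.symm hqq2ne
    · intro a b
      show G.Adj (![v 2, v 3, v 4, x, q, q2] a) (![v 2, v 3, v 4, x, q, q2] b) ↔ _
      fin_cases a <;> fin_cases b <;>
        first
          | exact iff_of_false (G.loopless.irrefl _) (by simp only [SimpleGraph.pathGraph_adj]; decide)
          | exact iff_of_true e23 (by simp only [SimpleGraph.pathGraph_adj]; decide)
          | exact iff_of_true e23.symm (by simp only [SimpleGraph.pathGraph_adj]; decide)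
          | exact iff_of_true e34 (by simp only [SimpleGraph.pathGraph_adj]; decide)
          | exact iff_of_true e34.symm (by simp only [SimpleGraph.pathGraph_adj]; decide)
          | exact iff_of_true ex4 (by simp only [SimpleGraph.pathGraph_adj]; decide)
          | exact iff_of_true ex4.symm (by simp only [SimpleGraph.pathGraph_adj]; decide)
          | exact iff_of_true hxq (by simp only [SimpleGraph.pathGraph_adj]; decide)
          | exact iff_of_true hxq.symm (by simp only [SimpleGraph.pathGraph_adj]; decide)
          | exact iff_of_true hqq2 (by simp only [SimpleGraph.pathGraph_adj]; decide)
          | exact iff_of_true hqq2.symm (by simp only [SimpleGraph.pathGraph_adj]; decide)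
          | exact iff_of_false e24 (by simp only [SimpleGraph.pathGraph_adj]; decide)
          | exact iff_of_false (fun h => e24 h.symm) (by simp only [SimpleGraph.pathGraph_adj]; decide)
          | exact iff_of_false ex2 (by simp only [SimpleGraph.pathGraph_adj]; decide)
          | exact iff_of_false (fun h => ex2 h.symm) (by simp only [SimpleGraph.pathGraph_adj]; decide)
          | exact iff_of_false ex3 (by simp only [SimpleGraph.pathGraph_adj]; decide)
          | exact iff_of_false (fun h => ex3 h.symm) (by simp only [SimpleGraph.pathGraph_adj]; decide)
          | exact iff_of_false hxq2 (by simp only [SimpleGraph.pathGraph_adj]; decide)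
          | exact iff_of_false (fun h => hxq2 h.symm) (by simp only [SimpleGraph.pathGraph_adj]; decide)
          | exact iff_of_false (nq _) (by simp only [SimpleGraph.pathGraph_adj]; decide)
          | exact iff_of_false (fun h => nq _ h.symm) (by simp only [SimpleGraph.pathGraph_adj]; decide)
          | exact iff_of_false (nq2 _) (by simp only [SimpleGraph.pathGraph_adj]; decide)
          | exact iff_of_false (fun h => nq2 _ h.symm) (by simp only [SimpleGraph.pathGraph_adj]; decide)
  -- x is adjacent to every vertex of Q reachable from a neighbor of x
  have key : ∀ (a b : Q), (G.induce Q).Reachable a b → G.Adj x (a : V) → G.Adj x (b : V) := by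
    intro a b hr
    obtain ⟨w⟩ := hr
    induction w with
    | nil => exact id
    | cons h p ih =>
        intro hxa
        exact ih (lemA _ _ (Subtype.mem _) (Subtype.mem _) hxa h)
  obtain ⟨q0, hq0Q, hxq0⟩ := hxQ
  obtain ⟨q1, hq1Q, hyq1⟩ := hyQ
  have hxq1 : G.Adj x q1 :=
    key ⟨q0, hq0Q⟩ ⟨q1, hq1Q⟩ (hQconn.preconnected _ _) hxq0
  -- final banner argument
  by_contra hxy
  have ey1 : G.Adj y (v 1) := (hy 1).mpr (by decide)
  have ey3 : G.Adj y (v 3) := (hy 3).mpr (by decide)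
  have ex1 : G.Adj x (v 1) := (hx 1).mpr (by decide)
  have ex3 : ¬ G.Adj x (v 3) := fun h => by simpa using (hx 3).mp h
  have e13 : ¬ G.Adj (v 1) (v 3) := fun h => by simpa using (hvadj 1 3).mp h
  have nq1 : ∀ i, ¬ G.Adj q1 (v i) := hQanti q1 hq1Q
  have hxyne : x ≠ y := by
    intro h
    have : G.Adj x (v 3) := h ▸ ey3
    exact ex3 this
  refine hban.false ⟨⟨![y, v 1, x, q1, v 3], ?_⟩, ?_⟩
  · have h1 : y ≠ v 1 := ey1.ne
    have h2 : y ≠ q1 := hyq1.ne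
    have h3 : y ≠ v 3 := ey3.ne
    have h4 : v 1 ≠ x := ex1.symm.ne
    have h5 : (v 1 : V) ≠ q1 := fun h => hQv 1 (h ▸ hq1Q)
    have h6 : (v 1 : V) ≠ v 3 := fun h => by simpa using hvinj h
    have h7 : x ≠ q1 := hxq1.ne
    have h8 : x ≠ v 3 := fun h => e13 (h ▸ ex1).symm
    have h9 : q1 ≠ v 3 := fun h => hQv 3 (h ▸ hq1Q)
    intro a b
    fin_cases a <;> fin_cases b <;> intro h <;>
      first
        | rfl
        | exact absurd h h1 | exact absurd h.symm h1
        | exact absurd h h2 | exact absurd h.symm h2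
        | exact absurd h h3 | exact absurd h.symm h3
        | exact absurd h h4 | exact absurd h.symm h4
        | exact absurd h h5 | exact absurd h.symm h5
        | exact absurd h h6 | exact absurd h.symm h6
        | exact absurd h h7 | exact absurd h.symm h7
        | exact absurd h h8 | exact absurd h.symm h8
        | exact absurd h h9 | exact absurd h.symm h9
        | exact absurd h hxyne | exact absurd h.symm hxyne
  · intro a b
    show G.Adj (![y, v 1, x, q1, v 3] a) (![y, v 1, x, q1, v 3] b) ↔ _
    fin_cases a <;> fin_cases b <;>
      first
        | exact iff_of_false (G.loopless.irrefl _) (by simp only [banner, SimpleGraph.fromRel_adj]; decide)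
        | exact iff_of_true ey1 (by simp only [banner, SimpleGraph.fromRel_adj]; decide)
        | exact iff_of_true ey1.symm (by simp only [banner, SimpleGraph.fromRel_adj]; decide)
        | exact iff_of_true ey3 (by simp only [banner, SimpleGraph.fromRel_adj]; decide)
        | exact iff_of_true ey3.symm (by simp only [banner, SimpleGraph.fromRel_adj]; decide)
        | exact iff_of_true ex1 (by simp only [banner, SimpleGraph.fromRel_adj]; decide)
        | exact iff_of_true ex1.symm (by simp only [banner, SimpleGraph.fromRel_adj]; decide)
        | exact iff_of_true hxq1 (by simp only [banner, SimpleGraph.fromRel_adj]; decide)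
        | exact iff_of_true hxq1.symm (by simp only [banner, SimpleGraph.fromRel_adj]; decide)
        | exact iff_of_true hyq1 (by simp only [banner, SimpleGraph.fromRel_adj]; decide)
        | exact iff_of_true hyq1.symm (by simp only [banner, SimpleGraph.fromRel_adj]; decide)
        | exact iff_of_false hxy (by simp only [banner, SimpleGraph.fromRel_adj]; decide)
        | exact iff_of_false (fun h => hxy h.symm) (by simp only [banner, SimpleGraph.fromRel_adj]; decide)
        | exact iff_of_false e13 (by simp only [banner, SimpleGraph.fromRel_adj]; decide)
        | exact iff_of_false (fun h => e13 h.symm) (by simp only [banner, SimpleGraph.fromRel_adj]; decide)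
        | exact iff_of_false ex3 (by simp only [banner, SimpleGraph.fromRel_adj]; decide)
        | exact iff_of_false (fun h => ex3 h.symm) (by simp only [banner, SimpleGraph.fromRel_adj]; decide)
        | exact iff_of_false (nq1 _) (by simp only [banner, SimpleGraph.fromRel_adj]; decide)
        | exact iff_of_false (fun h => nq1 _ h.symm) (by simp only [banner, SimpleGraph.fromRel_adj]; decide)
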